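/- Taylor remainder bound for powers (subquadratic case): let 1 < p ≤ 2. There exists C > 0 depending only on p such that for all u ≥ 0 and v ∈ ℝ with u + v ≥ 0, | (u+v)^{p+1} − u^{p+1} − (p+1)u^p v − (p(p+1)/2) u^{p−1} v² | ≤ C |v|^{p+1}. -/

import Mathlib

open Set

lemma stmt9_sub_rpow {α : ℝ} (hα0 : 0 < α) (hα1 : α ≤ 1) {a b : ℝ} (ha : 0 ≤ a)
    (hb : 0 ≤ b) (hab : b ≤ a) : a ^ α ≤ b ^ α + (a - b) ^ α := by
  have h := NNReal.rpow_add_le_add_rpow (b.toNNReal) ((a - b).toNNReal) hα0.le hα1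
  have hsum : b.toNNReal + (a - b).toNNReal = a.toNNReal := by
    rw [← Real.toNNReal_add hb (sub_nonneg.2 hab)]
    congr 1; ring
  rw [hsum] at h
  have h2 := NNReal.coe_le_coe.2 h
  rw [NNReal.coe_add] at h2
  rw [NNReal.coe_rpow, NNReal.coe_rpow, NNReal.coe_rpow,
    Real.coe_toNNReal a ha, Real.coe_toNNReal b hb,
    Real.coe_toNNReal _ (sub_nonneg.2 hab)] at h2
  exact h2

lemma stmt9_abs_rpow_sub_rpow {α : ℝ} (hα0 : 0 < α) (hα1 : α ≤ 1) {a b : ℝ} (ha : 0 ≤ a)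
    (hb : 0 ≤ b) : |a ^ α - b ^ α| ≤ |a - b| ^ α := by
  wlog hab : b ≤ a with H
  · rw [abs_sub_comm, abs_sub_comm a b]
    exact H hα0 hα1 hb ha (le_of_not_ge hab)
  rw [abs_of_nonneg (sub_nonneg.2 hab),
    abs_of_nonneg (sub_nonneg.2 (Real.rpow_le_rpow hb hab hα0.le))]
  have := stmt9_sub_rpow hα0 hα1 ha hb hab
  linarith

/-- Taylor remainder bound for powers, subquadratic case `1 < p ≤ 2`. -/
theorem stmt9 (p : ℝ) (hp1 : 1 < p) (hp2 : p ≤ 2) :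
    ∃ C > 0, ∀ u v : ℝ, 0 ≤ u → 0 ≤ u + v →
      |(u + v) ^ (p + 1) - u ^ (p + 1) - (p + 1) * u ^ p * v -
          (p * (p + 1) / 2) * u ^ (p - 1) * v ^ 2| ≤
        C * |v| ^ (p + 1) := by
  refine ⟨p * (p + 1), by nlinarith, ?_⟩
  intro u v hu huv
  rcases eq_or_ne v 0 with rfl | hv
  · simp
    positivity
  have hvpos : (0 : ℝ) < |v| := abs_pos.2 hv
  set s : Set ℝ := Set.uIcc (0 : ℝ) v with hs
  have hconv : Convex ℝ s := convex_uIcc _ _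
  have h0s : (0 : ℝ) ∈ s := Set.left_mem_uIcc
  have hvs : v ∈ s := Set.right_mem_uIcc
  have hmem : ∀ x ∈ s, |x| ≤ |v| ∧ 0 ≤ u + x := by
    intro x hx
    rcases Set.mem_uIcc.1 hx with ⟨h1, h2⟩ | ⟨h1, h2⟩
    · constructor
      · rw [abs_of_nonneg h1]; exact le_trans h2 (le_abs_self v)
      · linarith
    · constructor
      · rw [abs_of_nonpos h2]; linarith [neg_abs_le v]
      · linarith
  -- the first-order function F and its derivative
  set F : ℝ → ℝ := fun x => (u + x) ^ p - u ^ p - p * u ^ (p - 1) * x with hF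
  have hFderiv : ∀ x : ℝ, HasDerivAt F (p * ((u + x) ^ (p - 1) - u ^ (p - 1))) x := by
    intro x
    have h1 : HasDerivAt (fun x : ℝ => u + x) 1 x := by
      simpa using (hasDerivAt_id x).const_add u
    have h2 : HasDerivAt (fun x : ℝ => (u + x) ^ p) (p * (u + x) ^ (p - 1)) x := by
      have := (Real.hasDerivAt_rpow_const (x := u + x) (p := p) (Or.inr hp1.le)).comp x h1
      simpa [Function.comp_def] using this
    have h3 : HasDerivAt (fun x : ℝ => p * u ^ (p - 1) * x) (p * u ^ (p - 1)) x := by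
      simpa using (hasDerivAt_id x).const_mul (p * u ^ (p - 1))
    have := (h2.sub_const (u ^ p)).sub h3
    refine this.congr_deriv ?_
    ring
  have hppos : (0 : ℝ) < p := by linarith
  have hFbound : ∀ x ∈ s, |p * ((u + x) ^ (p - 1) - u ^ (p - 1))| ≤ p * |v| ^ (p - 1) := by
    intro x hx
    obtain ⟨hx1, hx2⟩ := hmem x hx
    rw [abs_mul, abs_of_pos hppos]
    refine mul_le_mul_of_nonneg_left ?_ hppos.le
    calc |(u + x) ^ (p - 1) - u ^ (p - 1)| ≤ |u + x - u| ^ (p - 1) :=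
          stmt9_abs_rpow_sub_rpow (by linarith) (by linarith) hx2 hu
      _ = |x| ^ (p - 1) := by ring_nf
      _ ≤ |v| ^ (p - 1) := Real.rpow_le_rpow (abs_nonneg x) hx1 (by linarith)
  have hFabs : ∀ x ∈ s, |F x| ≤ p * |v| ^ (p - 1) * |v| := by
    intro x hx
    have key := hconv.norm_image_sub_le_of_norm_hasDerivWithin_le
      (f := F) (f' := fun x => p * ((u + x) ^ (p - 1) - u ^ (p - 1)))
      (fun y hy => (hFderiv y).hasDerivWithinAt)
      (fun y hy => hFbound y hy) h0s hx
    have hF0 : F 0 = 0 := by simp [hF]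
    rw [hF0, sub_zero] at key
    calc |F x| = ‖F x‖ := rfl
      _ ≤ p * |v| ^ (p - 1) * ‖x - 0‖ := key
      _ = p * |v| ^ (p - 1) * |x| := by rw [sub_zero]; rfl
      _ ≤ p * |v| ^ (p - 1) * |v| := by
          refine mul_le_mul_of_nonneg_left (hmem x hx).1 ?_
          positivity
  -- the main function G and its derivative
  set G : ℝ → ℝ := fun x => (u + x) ^ (p + 1) - u ^ (p + 1) - (p + 1) * u ^ p * x -
      (p * (p + 1) / 2) * u ^ (p - 1) * x ^ 2 with hG
  have hGderiv : ∀ x : ℝ, HasDerivAt G ((p + 1) * F x) x := by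
    intro x
    have h1 : HasDerivAt (fun x : ℝ => u + x) 1 x := by
      simpa using (hasDerivAt_id x).const_add u
    have h2 : HasDerivAt (fun x : ℝ => (u + x) ^ (p + 1)) ((p + 1) * (u + x) ^ p) x := by
      have := (Real.hasDerivAt_rpow_const (x := u + x) (p := p + 1)
        (Or.inr (by linarith))).comp x h1
      simpa [add_sub_cancel_right, Function.comp_def] using this
    have h3 : HasDerivAt (fun x : ℝ => (p + 1) * u ^ p * x) ((p + 1) * u ^ p) x := by
      simpa using (hasDerivAt_id x).const_mul ((p + 1) * u ^ p)
    have h4 : HasDerivAt (fun x : ℝ => (p * (p + 1) / 2) * u ^ (p - 1) * x ^ 2)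
        ((p * (p + 1) / 2) * u ^ (p - 1) * (2 * x)) x := by
      have h5 : HasDerivAt (fun x : ℝ => x ^ 2) (2 * x) x := by
        simpa using hasDerivAt_pow 2 x
      simpa [mul_assoc] using h5.const_mul ((p * (p + 1) / 2) * u ^ (p - 1))
    have := ((h2.sub_const (u ^ (p + 1))).sub h3).sub h4
    refine this.congr_deriv ?_
    simp only [hF]
    ring
  have hGbound : ∀ x ∈ s, |(p + 1) * F x| ≤ (p + 1) * (p * |v| ^ (p - 1) * |v|) := by
    intro x hx
    rw [abs_mul, abs_of_pos (by linarith : (0:ℝ) < p + 1)]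
    exact mul_le_mul_of_nonneg_left (hFabs x hx) (by linarith)
  have key := hconv.norm_image_sub_le_of_norm_hasDerivWithin_le
    (f := G) (f' := fun x => (p + 1) * F x)
    (fun y hy => (hGderiv y).hasDerivWithinAt)
    (fun y hy => hGbound y hy) h0s hvs
  have hG0 : G 0 = 0 := by simp [hG]
  rw [hG0, sub_zero] at key
  have hfinal : |G v| ≤ (p + 1) * (p * |v| ^ (p - 1) * |v|) * |v| := by
    calc |G v| = ‖G v‖ := rfl
      _ ≤ (p + 1) * (p * |v| ^ (p - 1) * |v|) * ‖v - 0‖ := key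
      _ = (p + 1) * (p * |v| ^ (p - 1) * |v|) * |v| := by rw [sub_zero]; rfl
  have hrw : (p + 1) * (p * |v| ^ (p - 1) * |v|) * |v| = p * (p + 1) * |v| ^ (p + 1) := by
    rw [show p + 1 = (p - 1) + 1 + 1 by ring, Real.rpow_add hvpos, Real.rpow_add hvpos,
      Real.rpow_one]
    ring
  rw [hrw] at hfinal
  exact hfinal
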